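/- Let G be a finite unweighted graph. If (μ, x) is an eigenpair of the maxcut eigenproblem (M): 0 ∈ Δ₁x − μ·vol(V)·∂‖x‖_∞, and y ∈ ℝⁿ satisfies x ⪯ y, then for every t ∈ [0,1] the pair (μ, t·x + (1−t)·y) is also an eigenpair of (M). -/
import Mathlib

open Finset

noncomputable section

/-- The set-valued sign function: `{1}` if `t > 0`, `{-1}` if `t < 0`, `[-1,1]` if `t = 0`. -/
def Sgn (t : ℝ) : Set ℝ := if 0 < t then {1} else if t < 0 then {-1} else Set.Icc (-1) 1

variable {n : ℕ}

/-- The degree `d_i` of vertex `i` (unit edge weights), as a real number. -/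
def degR (G : SimpleGraph (Fin n)) [DecidableRel G.Adj] (i : Fin n) : ℝ := (G.degree i : ℝ)

/-- `vol(V) = Σ_i d_i`. -/
def volV (G : SimpleGraph (Fin n)) [DecidableRel G.Adj] : ℝ := ∑ i, degR G i

/-- `(Δ₁ x)`-type row sum `Σ_{j ∼ i} z_{ij}`. -/
def rowSum (G : SimpleGraph (Fin n)) [DecidableRel G.Adj] (z : Fin n → Fin n → ℝ)
    (i : Fin n) : ℝ :=
  ∑ j, if G.Adj i j then z i j else 0

/-- `D₊(x) = {i : x_i = ‖x‖_∞}` (the norm on `Fin n → ℝ` is the sup norm). -/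
def Dplus (x : Fin n → ℝ) : Set (Fin n) := {i | x i = ‖x‖}

/-- `D₋(x) = {i : −x_i = ‖x‖_∞}`. -/
def Dminus (x : Fin n → ℝ) : Set (Fin n) := {i | -x i = ‖x‖}

/-- `D₀(x) = {i : |x_i| < ‖x‖_∞}`. -/
def Dzero (x : Fin n → ℝ) : Set (Fin n) := {i | |x i| < ‖x‖}

/-- `(μ, x)` with `x ≠ 0` is an eigenpair of the maxcut eigenproblem (M):
`0 ∈ Δ₁x − μ·vol(V)·∂‖x‖_∞`. -/
def IsEigenM (G : SimpleGraph (Fin n)) [DecidableRel G.Adj]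
    (mu : ℝ) (x : Fin n → ℝ) : Prop :=
  x ≠ 0 ∧ ∃ z : Fin n → Fin n → ℝ,
    (∀ i j, G.Adj i j → z i j ∈ Sgn (x i - x j)) ∧
    (∀ i j, z i j = - z j i) ∧
    (∀ i, i ∈ Dzero x → rowSum G z i = 0) ∧
    (∀ i, i ∈ Dplus x ∪ Dminus x →
      ∃ p ∈ Set.Icc (0 : ℝ) 1, rowSum G z i = mu * volV G * Real.sign (x i) * p) ∧
    (∑ i, |rowSum G z i|) = mu * volV G

/-- The relation `x ⪯ y`. -/
def Preceq (x y : Fin n → ℝ) : Prop :=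
  x ≠ 0 ∧ y ≠ 0 ∧ Dplus x ⊆ Dplus y ∧ Dminus x ⊆ Dminus y ∧
    (∀ i j, x i < x j → y i ≤ y j) ∧ (∀ i j, x i = x j → y i = y j)

lemma sgn_mono' {u v a : ℝ} (h : a ∈ Sgn u)
    (h1 : 0 < u → 0 ≤ v) (h2 : u < 0 → v ≤ 0) (h3 : u = 0 → v = 0) : a ∈ Sgn v := by
  unfold Sgn at *
  rcases lt_trichotomy u 0 with hu | hu | hu
  · simp only [if_neg (not_lt.mpr hu.le), if_pos hu, Set.mem_singleton_iff] at h
    subst h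
    have hv := h2 hu
    rcases eq_or_lt_of_le hv with hv0 | hv0
    · subst hv0; norm_num
    · simp [if_neg (not_lt.mpr hv0.le), if_pos hv0]
  · subst hu
    rw [h3 rfl]; exact h
  · simp only [if_pos hu, Set.mem_singleton_iff] at h
    subst h
    have hv := h1 hu
    rcases eq_or_lt_of_le hv with hv0 | hv0
    · rw [← hv0]; norm_num
    · simp [if_pos hv0]

theorem stmt12 (G : SimpleGraph (Fin n)) [DecidableRel G.Adj]
    (mu : ℝ) (x y : Fin n → ℝ)
    (hx : IsEigenM G mu x) (hxy : Preceq x y) :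
    ∀ t ∈ Set.Icc (0 : ℝ) 1, IsEigenM G mu (t • x + (1 - t) • y) := by
  obtain ⟨hx0, z, hz1, hz2, hz3, hz4, hz5⟩ := hx
  obtain ⟨-, hy0, hpp, hmm, hlt, heqr⟩ := hxy
  intro t ⟨ht0, ht1⟩
  set w : Fin n → ℝ := t • x + (1 - t) • y with hwdef
  have hwi : ∀ i, w i = t * x i + (1 - t) * y i := fun i => rfl
  have hxpos : 0 < ‖x‖ := norm_pos_iff.mpr hx0
  have hypos : 0 < ‖y‖ := norm_pos_iff.mpr hy0
  have habsx : ∀ i, |x i| ≤ ‖x‖ := fun i => by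
    simpa [Real.norm_eq_abs] using norm_le_pi_norm x i
  have habsy : ∀ i, |y i| ≤ ‖y‖ := fun i => by
    simpa [Real.norm_eq_abs] using norm_le_pi_norm y i
  set c : ℝ := t * ‖x‖ + (1 - t) * ‖y‖ with hc
  have hcpos : 0 < c := by
    rcases eq_or_lt_of_le ht0 with h | h
    · rw [hc, ← h]; simpa using hypos
    · nlinarith
  have hwle : ∀ i, |w i| ≤ c := by
    intro i
    have h1 : |w i| ≤ t * |x i| + (1 - t) * |y i| := by
      rw [hwi]
      refine (abs_add_le _ _).trans ?_
      rw [abs_mul, abs_mul, abs_of_nonneg ht0, abs_of_nonneg (by linarith : (0:ℝ) ≤ 1 - t)]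
    refine h1.trans ?_
    have := habsx i; have := habsy i
    nlinarith
  -- norm of w is at most c
  have hnwle : ‖w‖ ≤ c := by
    refine (pi_norm_le_iff_of_nonneg hcpos.le).mpr fun i => ?_
    simpa [Real.norm_eq_abs] using hwle i
  -- find a maximizer of |x|
  have hne : Nonempty (Fin n) := by
    by_contra h
    exact hx0 (funext fun i => ((h ⟨i⟩).elim))
  obtain ⟨i0, -, hi0max⟩ := Finset.exists_max_image (univ : Finset (Fin n))
    (fun i => |x i|) ⟨Classical.arbitrary _, mem_univ _⟩
  have hi0 : |x i0| = ‖x‖ := by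
    refine le_antisymm (habsx i0) ?_
    refine (pi_norm_le_iff_of_nonneg (abs_nonneg _)).mpr fun i => ?_
    simpa [Real.norm_eq_abs] using hi0max i (mem_univ i)
  -- values of w on Dplus x / Dminus x
  have hDpw : ∀ i, i ∈ Dplus x → w i = c := by
    intro i hi
    have hyi : y i = ‖y‖ := hpp hi
    rw [hwi, hi, hyi]
  have hDmw : ∀ i, i ∈ Dminus x → w i = -c := by
    intro i hi
    have hyi : -y i = ‖y‖ := hmm hi
    have hxi : x i = -‖x‖ := by have := hi; simp only [Dminus, Set.mem_setOf_eq] at this; linarith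
    have hyi' : y i = -‖y‖ := by linarith
    rw [hwi, hxi, hyi']; ring
  -- the norm of w equals c
  have hnw : ‖w‖ = c := by
    refine le_antisymm hnwle ?_
    have hle : |w i0| ≤ ‖w‖ := by
      simpa [Real.norm_eq_abs] using norm_le_pi_norm w i0
    rcases abs_eq (norm_nonneg x) |>.mp hi0 with h | h
    · have := hDpw i0 h
      calc c = |w i0| := by rw [this]; exact (abs_of_nonneg hcpos.le).symm
        _ ≤ ‖w‖ := hle
    · have : i0 ∈ Dminus x := by simp only [Dminus, Set.mem_setOf_eq]; linarith
      have hw0 := hDmw i0 this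
      calc c = |w i0| := by rw [hw0, abs_neg]; exact (abs_of_nonneg hcpos.le).symm
        _ ≤ ‖w‖ := hle
  have hw0 : w ≠ 0 := by
    intro h
    rw [h] at hnw
    simp at hnw
    exact absurd hnw hcpos.ne
  -- trichotomy for x
  have hTri : ∀ i, i ∈ Dplus x ∨ i ∈ Dminus x ∨ i ∈ Dzero x := by
    intro i
    rcases eq_or_lt_of_le (habsx i) with h | h
    · rcases abs_eq (norm_nonneg x) |>.mp h with h' | h'
      · exact Or.inl h'
      · exact Or.inr (Or.inl (by simp only [Dminus, Set.mem_setOf_eq]; linarith))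
    · exact Or.inr (Or.inr h)
  -- Dzero w ⊆ Dzero x
  have hDz : ∀ i, i ∈ Dzero w → i ∈ Dzero x := by
    intro i hi
    rcases hTri i with h | h | h
    · exfalso
      have := hDpw i h
      simp only [Dzero, Set.mem_setOf_eq, this, hnw, abs_of_nonneg hcpos.le] at hi
      exact lt_irrefl _ hi
    · exfalso
      have := hDmw i h
      simp only [Dzero, Set.mem_setOf_eq, this, hnw, abs_neg, abs_of_nonneg hcpos.le] at hi
      exact lt_irrefl _ hi
    · exact h
  refine ⟨hw0, z, ?_, hz2, ?_, ?_, hz5⟩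
  · -- Sgn condition
    intro i j hadj
    refine sgn_mono' (hz1 i j hadj) ?_ ?_ ?_
    · intro h
      have hxy' : x j < x i := by linarith
      have := hlt j i hxy'
      rw [hwi, hwi]
      nlinarith
    · intro h
      have hxy' : x i < x j := by linarith
      have := hlt i j hxy'
      rw [hwi, hwi]
      nlinarith
    · intro h
      have hxij : x i = x j := by linarith
      have := heqr i j hxij
      rw [hwi, hwi, hxij, this]
      ring
  · intro i hi
    exact hz3 i (hDz i hi)
  · intro i hi
    rcases hTri i with h | h | h
    · obtain ⟨p, hp, hps⟩ := hz4 i (Or.inl h)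
      refine ⟨p, hp, ?_⟩
      have hsx : Real.sign (x i) = 1 := Real.sign_of_pos (by rw [h]; exact hxpos)
      have hsw : Real.sign (w i) = 1 := Real.sign_of_pos (by rw [hDpw i h]; exact hcpos)
      rw [hsw, hps, hsx]
    · obtain ⟨p, hp, hps⟩ := hz4 i (Or.inr h)
      refine ⟨p, hp, ?_⟩
      have hxi : x i < 0 := by
        have := h; simp only [Dminus, Set.mem_setOf_eq] at this; linarith
      have hsx : Real.sign (x i) = -1 := Real.sign_of_neg hxi
      have hsw : Real.sign (w i) = -1 := Real.sign_of_neg (by rw [hDmw i h]; linarith)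
      rw [hsw, hps, hsx]
    · exact ⟨0, ⟨le_refl _, zero_le_one⟩, by rw [hz3 i h]; ring⟩
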